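/- Let $0<p<1$. The function $G(u,y):=\sup_{c\ge u}\left(\frac{c^p}{p}-cy\right)$ is continuously differentiable on $(0,\infty)\times(0,\infty)$, with partial derivatives $\partial_u G(u,y)=-(y-u^{p-1})^+$ and $\partial_y G(u,y)=-\max\{y^{1/(p-1)},\,u\}$, where $t^+:=\max\{t,0\}$. -/

import Mathlib

open Real Set Filter Topology

/-- `G p u y = sup_{c ≥ u} (c^p/p - c y)`. -/
noncomputable def G (p u y : ℝ) : ℝ :=
  sSup ((fun c : ℝ => c ^ p / p - c * y) '' {c : ℝ | u ≤ c})

namespace Stmt1Aux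

noncomputable def fB (p y c : ℝ) : ℝ := c ^ p / p - c * y

noncomputable def cs (p y : ℝ) : ℝ := y ^ (1 / (p - 1))

variable {p u y c : ℝ}

lemma hpne (hp1 : p < 1) : p - 1 ≠ 0 := by linarith

lemma inv_ne (hp1 : p < 1) : 1 / (p - 1) ≤ 0 := by
  rw [one_div]; exact inv_nonpos.mpr (by linarith)

lemma cs_pos (hy : 0 < y) : 0 < cs p y := Real.rpow_pos_of_pos hy _

lemma cs_rpow (hp1 : p < 1) (hy : 0 < y) : cs p y ^ (p - 1) = y := by
  rw [cs, ← Real.rpow_mul hy.le, one_div, inv_mul_cancel₀ (hpne hp1), Real.rpow_one]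

lemma rpow_cs (hp1 : p < 1) (hu : 0 < u) : cs p (u ^ (p - 1)) = u := by
  rw [cs, ← Real.rpow_mul hu.le, mul_one_div, div_self (hpne hp1), Real.rpow_one]

lemma le_cs_iff (hp1 : p < 1) (hu : 0 < u) (hy : 0 < y) :
    u ≤ cs p y ↔ y ≤ u ^ (p - 1) := by
  constructor
  · intro h
    have h2 := Real.rpow_le_rpow_of_nonpos hu h (by linarith : p - 1 ≤ 0)
    rwa [cs_rpow hp1 hy] at h2
  · intro h
    have h2 := Real.rpow_le_rpow_of_nonpos hy h (inv_ne hp1)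
    have h3 : cs p (u ^ (p - 1)) ≤ cs p y := h2
    rwa [rpow_cs hp1 hu] at h3

lemma cs_le_iff (hp1 : p < 1) (hu : 0 < u) (hy : 0 < y) :
    cs p y ≤ u ↔ u ^ (p - 1) ≤ y := by
  constructor
  · intro h
    have h2 := Real.rpow_le_rpow_of_nonpos (cs_pos hy) h (by linarith : p - 1 ≤ 0)
    rwa [cs_rpow hp1 hy] at h2
  · intro h
    have h2 := Real.rpow_le_rpow_of_nonpos (Real.rpow_pos_of_pos hu _) h (inv_ne hp1)
    have h3 : cs p y ≤ cs p (u ^ (p - 1)) := h2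
    rwa [rpow_cs hp1 hu] at h3

lemma fB_cs (hp0 : 0 < p) (hp1 : p < 1) (hy : 0 < y) :
    fB p y (cs p y) = (1 / p - 1) * y ^ (p / (p - 1)) := by
  have hne := hpne hp1
  have h1 : cs p y ^ p = y ^ (p / (p - 1)) := by
    rw [cs, ← Real.rpow_mul hy.le, one_div, div_eq_inv_mul]
  have h2 : cs p y * y = y ^ (p / (p - 1)) := by
    rw [cs]
    nth_rewrite 2 [show y = y ^ (1:ℝ) by rw [Real.rpow_one]]
    rw [← Real.rpow_add hy, show 1 / (p - 1) + 1 = p / (p - 1) by field_simp; ring]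
  rw [fB, h1, h2]
  field_simp

lemma hasDerivAt_fB (hp0 : 0 < p) (hc : c ≠ 0) :
    HasDerivAt (fB p y) (c ^ (p - 1) - y) c := by
  have h1 : HasDerivAt (fun c : ℝ => c ^ p / p) (p * c ^ (p - 1) / p) c :=
    (Real.hasDerivAt_rpow_const (Or.inl hc)).div_const p
  have h2 : HasDerivAt (fun c : ℝ => c * y) y c := by
    simpa using (hasDerivAt_id c).mul_const y
  have h := h1.sub h2
  rw [mul_div_cancel_left₀ _ hp0.ne'] at h
  exact h

lemma fB_anti (hp0 : 0 < p) (hp1 : p < 1) (hy : 0 < y) :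
    AntitoneOn (fB p y) (Ici (cs p y)) := by
  have hcs := cs_pos (p := p) hy
  refine antitoneOn_of_deriv_nonpos (convex_Ici _) ?_ ?_ ?_
  · intro x hx
    exact ((hasDerivAt_fB hp0 (hcs.trans_le hx).ne').differentiableAt).continuousAt.continuousWithinAt
  · intro x hx
    rw [interior_Ici] at hx
    exact ((hasDerivAt_fB hp0 (hcs.trans hx).ne').differentiableAt).differentiableWithinAt
  · intro x hx
    rw [interior_Ici] at hx
    rw [(hasDerivAt_fB hp0 (hcs.trans hx).ne').deriv]
    have h := Real.rpow_le_rpow_of_nonpos hcs (le_of_lt hx) (by linarith : p - 1 ≤ 0)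
    rw [cs_rpow hp1 hy] at h
    linarith

lemma fB_mono (hp0 : 0 < p) (hp1 : p < 1) (hu : 0 < u) (hy : 0 < y) :
    MonotoneOn (fB p y) (Icc u (cs p y)) := by
  refine monotoneOn_of_deriv_nonneg (convex_Icc _ _) ?_ ?_ ?_
  · intro x hx
    exact ((hasDerivAt_fB hp0 (hu.trans_le hx.1).ne').differentiableAt).continuousAt.continuousWithinAt
  · intro x hx
    rw [interior_Icc] at hx
    exact ((hasDerivAt_fB hp0 (hu.trans hx.1).ne').differentiableAt).differentiableWithinAt
  · intro x hx
    rw [interior_Icc] at hx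
    rw [(hasDerivAt_fB hp0 (hu.trans hx.1).ne').deriv]
    have h := Real.rpow_le_rpow_of_nonpos (hu.trans hx.1) (le_of_lt hx.2) (by linarith : p - 1 ≤ 0)
    rw [cs_rpow hp1 hy] at h
    linarith

lemma isGreatest (hp0 : 0 < p) (hp1 : p < 1) (hu : 0 < u) (hy : 0 < y) :
    IsGreatest ((fB p y) '' {c : ℝ | u ≤ c}) (fB p y (max (cs p y) u)) := by
  constructor
  · exact ⟨max (cs p y) u, le_max_right (cs p y) u, rfl⟩
  · rintro v ⟨c, hc, rfl⟩
    simp only [mem_setOf_eq] at hc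
    rcases le_total u (cs p y) with h | h
    · rw [max_eq_left h]
      rcases le_total c (cs p y) with h2 | h2
      · exact fB_mono hp0 hp1 hu hy ⟨hc, h2⟩ ⟨h, le_refl _⟩ h2
      · exact fB_anti hp0 hp1 hy self_mem_Ici h2 h2
    · rw [max_eq_right h]
      exact fB_anti hp0 hp1 hy h (h.trans hc) hc

lemma G_eq (hp0 : 0 < p) (hp1 : p < 1) (hu : 0 < u) (hy : 0 < y) :
    G p u y = fB p y (max (cs p y) u) :=
  (isGreatest hp0 hp1 hu hy).csSup_eq

/-- closed form of G as a function on the plane -/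
noncomputable def Gf (p : ℝ) (q : ℝ × ℝ) : ℝ := fB p q.2 (max (cs p q.2) q.1)

noncomputable def Af (p : ℝ) (q : ℝ × ℝ) : ℝ := (1 / p - 1) * q.2 ^ (p / (p - 1))

noncomputable def Bf (p : ℝ) (q : ℝ × ℝ) : ℝ := q.1 ^ p / p - q.1 * q.2

/-- the candidate total derivative -/
noncomputable def L (p : ℝ) (q : ℝ × ℝ) : (ℝ × ℝ) →L[ℝ] ℝ :=
  (-(max (q.2 - q.1 ^ (p - 1)) 0)) • (ContinuousLinearMap.fst ℝ ℝ ℝ) +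
  (-(max (cs p q.2) q.1)) • (ContinuousLinearMap.snd ℝ ℝ ℝ)

variable {q : ℝ × ℝ}

lemma Gf_eq_A (hp0 : 0 < p) (hp1 : p < 1) (hq2 : 0 < q.2) (h : q.1 ≤ cs p q.2) :
    Gf p q = Af p q := by
  rw [Gf, max_eq_left h, fB_cs hp0 hp1 hq2, Af]

lemma Gf_eq_B (h : cs p q.2 ≤ q.1) : Gf p q = Bf p q := by
  rw [Gf, max_eq_right h]; rfl

lemma hasFDerivAt_A (hp0 : 0 < p) (hp1 : p < 1) (hq2 : 0 < q.2) :
    HasFDerivAt (Af p) ((-(cs p q.2)) • (ContinuousLinearMap.snd ℝ ℝ ℝ)) q := by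
  have h := ((hasFDerivAt_snd (𝕜 := ℝ) (p := q)).rpow_const (p := p / (p - 1))
    (Or.inl hq2.ne')).const_mul (1 / p - 1)
  have hco : (1 / p - 1) * (p / (p - 1) * q.2 ^ (p / (p - 1) - 1)) = -(cs p q.2) := by
    have hne := hpne hp1
    have he : p / (p - 1) - 1 = 1 / (p - 1) := by field_simp; ring
    have hc : (1 / p - 1) * (p / (p - 1)) = -1 := by
      field_simp
      ring
    rw [he, ← mul_assoc, hc, cs]
    ring
  rw [smul_smul, hco] at h
  exact h

lemma hasFDerivAt_B (hp0 : 0 < p) (hq1 : 0 < q.1) :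
    HasFDerivAt (Bf p)
      ((q.1 ^ (p - 1) - q.2) • (ContinuousLinearMap.fst ℝ ℝ ℝ) +
        (-q.1) • (ContinuousLinearMap.snd ℝ ℝ ℝ)) q := by
  have h1 := ((hasFDerivAt_fst (𝕜 := ℝ) (p := q)).rpow_const (p := p)
    (Or.inl hq1.ne')).mul_const p⁻¹
  simp only [← div_eq_mul_inv] at h1
  have h2 := (hasFDerivAt_fst (𝕜 := ℝ) (p := q)).mul (hasFDerivAt_snd (𝕜 := ℝ) (p := q))
  have h := h1.sub h2
  refine h.congr_fderiv ?_
  refine ContinuousLinearMap.ext fun v => ?_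
  simp [smul_smul]
  field_simp
  ring

/-- glue lemma -/
lemma hasFDerivAt_of_or {f A B : ℝ × ℝ → ℝ} {L : (ℝ × ℝ) →L[ℝ] ℝ} {q₀ : ℝ × ℝ}
    (hA : HasFDerivAt A L q₀) (hB : HasFDerivAt B L q₀)
    (hfa : f q₀ = A q₀) (hfb : f q₀ = B q₀)
    (h : ∀ᶠ q in 𝓝 q₀, f q = A q ∨ f q = B q) : HasFDerivAt f L q₀ := by
  rw [hasFDerivAt_iff_isLittleO_nhds_zero] at hA hB ⊢
  rw [Asymptotics.isLittleO_iff] at hA hB ⊢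
  intro c hc
  have ht : Tendsto (fun v : ℝ × ℝ => q₀ + v) (𝓝 0) (𝓝 q₀) := by
    simpa using
      (tendsto_const_nhds.add tendsto_id : Tendsto (fun v : ℝ × ℝ => q₀ + v) (𝓝 0) (𝓝 (q₀ + 0)))
  filter_upwards [hA hc, hB hc, ht.eventually h] with v h1 h2 h3
  rcases h3 with h3 | h3
  · rw [h3, hfa]; exact h1
  · rw [h3, hfb]; exact h2

lemma hasFDerivAt_Gf (hp0 : 0 < p) (hp1 : p < 1) (hq1 : 0 < q.1) (hq2 : 0 < q.2) :
    HasFDerivAt (Gf p) (L p q) q := by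
  have hcont_cs : ContinuousAt (fun q : ℝ × ℝ => cs p q.2) q :=
    (Real.continuousAt_rpow_const _ _ (Or.inl hq2.ne')).comp continuousAt_snd
  have hev2 : ∀ᶠ q' in 𝓝 q, 0 < q'.2 :=
    (isOpen_lt continuous_const continuous_snd).eventually_mem hq2
  rcases lt_trichotomy q.1 (cs p q.2) with hlt | heq | hgt
  · -- strict A region
    have h1 : q.2 < q.1 ^ (p - 1) := by
      by_contra hcon
      push_neg at hcon
      exact absurd ((cs_le_iff hp1 hq1 hq2).mpr hcon) (not_le.mpr hlt)
    have hL : L p q = (-(cs p q.2)) • (ContinuousLinearMap.snd ℝ ℝ ℝ) := by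
      have hm1 : max (q.2 - q.1 ^ (p - 1)) 0 = 0 := max_eq_right (by linarith)
      have hm2 : max (cs p q.2) q.1 = cs p q.2 := max_eq_left hlt.le
      refine ContinuousLinearMap.ext fun v => ?_
      simp [L, hm1, hm2]
    rw [hL]
    refine (hasFDerivAt_A hp0 hp1 hq2).congr_of_eventuallyEq ?_
    have hev : ∀ᶠ q' in 𝓝 q, q'.1 < cs p q'.2 :=
      continuousAt_fst.eventually_lt hcont_cs hlt
    filter_upwards [hev, hev2] with q' ha hb
    exact Gf_eq_A hp0 hp1 hb ha.le
  · -- boundary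
    have hy1 : q.1 ^ (p - 1) = q.2 := by rw [heq, cs_rpow hp1 hq2]
    have hL : L p q = (-(cs p q.2)) • (ContinuousLinearMap.snd ℝ ℝ ℝ) := by
      have hm1 : max (q.2 - q.1 ^ (p - 1)) 0 = 0 := max_eq_right (by rw [hy1]; simp)
      have hm2 : max (cs p q.2) q.1 = cs p q.2 := max_eq_left heq.le
      refine ContinuousLinearMap.ext fun v => ?_
      simp [L, hm1, hm2]
    rw [hL]
    have hB := hasFDerivAt_B (q := q) hp0 hq1
    have hBL : (q.1 ^ (p - 1) - q.2) • (ContinuousLinearMap.fst ℝ ℝ ℝ) +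
        (-q.1) • (ContinuousLinearMap.snd ℝ ℝ ℝ)
        = (-(cs p q.2)) • (ContinuousLinearMap.snd ℝ ℝ ℝ) := by
      refine ContinuousLinearMap.ext fun v => ?_
      simp [hy1, ← heq]
    rw [hBL] at hB
    refine hasFDerivAt_of_or (hasFDerivAt_A hp0 hp1 hq2) hB
      (Gf_eq_A hp0 hp1 hq2 heq.le) (Gf_eq_B heq.ge) ?_
    filter_upwards [hev2] with q' hb
    rcases le_total q'.1 (cs p q'.2) with h | h
    · exact Or.inl (Gf_eq_A hp0 hp1 hb h)
    · exact Or.inr (Gf_eq_B h)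
  · -- strict B region
    have h1 : q.1 ^ (p - 1) < q.2 := by
      by_contra hcon
      push_neg at hcon
      exact absurd ((le_cs_iff hp1 hq1 hq2).mpr hcon) (not_le.mpr hgt)
    have hL : L p q = (q.1 ^ (p - 1) - q.2) • (ContinuousLinearMap.fst ℝ ℝ ℝ) +
        (-q.1) • (ContinuousLinearMap.snd ℝ ℝ ℝ) := by
      have hm1 : max (q.2 - q.1 ^ (p - 1)) 0 = q.2 - q.1 ^ (p - 1) :=
        max_eq_left (by linarith)
      have hm2 : max (cs p q.2) q.1 = q.1 := max_eq_right hgt.le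
      refine ContinuousLinearMap.ext fun v => ?_
      simp [L, hm1, hm2]
    rw [hL]
    refine (hasFDerivAt_B hp0 hq1).congr_of_eventuallyEq ?_
    have hev : ∀ᶠ q' in 𝓝 q, cs p q'.2 < q'.1 :=
      hcont_cs.eventually_lt continuousAt_fst hgt
    filter_upwards [hev] with q' ha
    exact Gf_eq_B ha.le

end Stmt1Aux

open Stmt1Aux in
/-- `G` is continuously differentiable on `(0,∞) × (0,∞)` with
`∂_u G = -(y - u^(p-1))⁺` and `∂_y G = -max {y^(1/(p-1)), u}`. -/
theorem stmt_1 (p : ℝ) (hp0 : 0 < p) (hp1 : p < 1) :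
    ContDiffOn ℝ 1 (fun q : ℝ × ℝ => G p q.1 q.2) (Ioi 0 ×ˢ Ioi 0) ∧
    ∀ u y : ℝ, 0 < u → 0 < y →
      HasDerivAt (fun u' => G p u' y) (-(max (y - u ^ (p - 1)) 0)) u ∧
      HasDerivAt (fun y' => G p u y') (-(max (y ^ (1 / (p - 1))) u)) y := by
  have hs : IsOpen (Ioi (0:ℝ) ×ˢ Ioi (0:ℝ)) := isOpen_Ioi.prod isOpen_Ioi
  have hGf : ∀ q ∈ Ioi (0:ℝ) ×ˢ Ioi (0:ℝ), HasFDerivAt (Gf p) (L p q) q := fun q hq =>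
    hasFDerivAt_Gf hp0 hp1 hq.1 hq.2
  constructor
  · refine ContDiffOn.congr ?_ (fun q hq => (G_eq hp0 hp1 hq.1 hq.2).trans rfl)
    rw [show (1 : WithTop ℕ∞) = 0 + 1 by norm_num, contDiffOn_succ_iff_fderiv_of_isOpen hs]
    refine ⟨fun q hq => (hGf q hq).differentiableAt.differentiableWithinAt, ?_, ?_⟩
    · intro h
      exact absurd h (by simp)
    · rw [contDiffOn_zero]
      have hc1 : ContinuousOn (fun q : ℝ × ℝ => -(max (q.2 - q.1 ^ (p - 1)) 0))
          (Ioi (0:ℝ) ×ˢ Ioi (0:ℝ)) :=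
        ((continuous_snd.continuousOn.sub ((continuous_fst.continuousOn).rpow_const
          (fun q (hq : q ∈ Ioi (0:ℝ) ×ˢ Ioi (0:ℝ)) => Or.inl (ne_of_gt hq.1)))).sup continuousOn_const).neg
      have hc2 : ContinuousOn (fun q : ℝ × ℝ => -(max (cs p q.2) q.1))
          (Ioi (0:ℝ) ×ˢ Ioi (0:ℝ)) :=
        ((((continuous_snd.continuousOn).rpow_const
          (fun q (hq : q ∈ Ioi (0:ℝ) ×ˢ Ioi (0:ℝ)) => Or.inl (ne_of_gt hq.2))).sup continuous_fst.continuousOn)).neg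
      have hcL : ContinuousOn (L p) (Ioi (0:ℝ) ×ˢ Ioi (0:ℝ)) :=
        (hc1.smul continuousOn_const).add (hc2.smul continuousOn_const)
      exact hcL.congr (fun q hq => (hGf q hq).fderiv)
  · intro u y hu hy
    have hF := hasFDerivAt_Gf (q := (u, y)) hp0 hp1 hu hy
    have hevu : (fun u' => G p u' y) =ᶠ[𝓝 u] fun u' => Gf p (u', y) := by
      filter_upwards [isOpen_Ioi.eventually_mem hu] with u' hu'
      exact G_eq hp0 hp1 hu' hy
    have hevy : (fun y' => G p u y') =ᶠ[𝓝 y] fun y' => Gf p (u, y') := by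
      filter_upwards [isOpen_Ioi.eventually_mem hy] with y' hy'
      exact G_eq hp0 hp1 hu hy'
    constructor
    · have h1 : HasDerivAt (fun u' => Gf p (u', y)) (L p (u, y) (1, 0)) u :=
        hF.comp_hasDerivAt (f := fun u' : ℝ => (u', y)) u ((hasDerivAt_id' u).prodMk (hasDerivAt_const u y))
      have h2 : L p (u, y) (1, 0) = -(max (y - u ^ (p - 1)) 0) := by simp [L]
      exact (h2 ▸ h1).congr_of_eventuallyEq hevu
    · have h1 : HasDerivAt (fun y' => Gf p (u, y')) (L p (u, y) (0, 1)) y :=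
        hF.comp_hasDerivAt y ((hasDerivAt_const y u).prodMk (hasDerivAt_id y))
      have h2 : L p (u, y) (0, 1) = -(max (y ^ (1 / (p - 1))) u) := by simp [L, cs]
      exact (h2 ▸ h1).congr_of_eventuallyEq hevy
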